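/- Let m ≥ 1 be an integer, q₀ = 2^m, q = 2q₀², and let F be a finite field with q⁴ elements. Let α ∈ F and set c = α^{q₀+q} + α^{q₀+1}. If the polynomial Y^q + Y + c ∈ F[Y] has no root in F, then every monic irreducible factor of Y^q + Y + c in F[Y] has degree 2 (so Y^q + Y + c factors into q/2 irreducible quadratic factors). -/

import Mathlib

open Polynomial

theorem suzuki_nonsplit_fiber_factors_into_quadratics
    (m q₀ q : ℕ) (hm : 1 ≤ m) (hq₀ : q₀ = 2 ^ m) (hq : q = 2 * q₀ ^ 2)
    (F : Type*) [Field F] [Fintype F] (hF : Fintype.card F = q ^ 4)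
    (α : F) (c : F) (hc : c = α ^ (q₀ + q) + α ^ (q₀ + 1))
    (hroot : ¬ ∃ y : F, y ^ q + y + c = 0) :
    ∀ p : Polynomial F, p.Monic → Irreducible p →
      p ∣ (Polynomial.X ^ q + Polynomial.X + Polynomial.C c) → p.natDegree = 2 := by
  intro p pmonic pirr pdvd
  have hq2 : q = 2 ^ (2 * m + 1) := by subst hq₀ hq; ring
  -- characteristic 2
  have h2 : (2 : F) = 0 := by
    have h := FiniteField.cast_card_eq_zero F
    rw [hF, hq2, Nat.cast_pow, Nat.cast_pow, Nat.cast_ofNat, ← pow_mul] at h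
    exact pow_eq_zero_iff (by positivity) |>.mp h
  have hr2 : ringChar F = 2 := CharP.ringChar_of_prime_eq_zero Nat.prime_two h2
  haveI : CharP F 2 := hr2 ▸ ringChar.charP F
  -- the degree is not 0 and not 1
  have hd0 : p.natDegree ≠ 0 := pirr.natDegree_pos.ne'
  have hd1 : p.natDegree ≠ 1 := by
    intro h1
    apply hroot
    refine ⟨p.coeff 0, ?_⟩
    have hp : p = X + C (p.coeff 0) := pmonic.eq_X_add_C h1
    obtain ⟨r, hr⟩ := pdvd
    have hev : (X ^ q + X + C c).eval (p.coeff 0) = 0 := by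
      rw [hr, eval_mul, hp]
      simp [CharTwo.add_self_eq_zero]
    simpa using hev
  -- now the upper bound: work in K = AdjoinRoot p
  haveI := Fact.mk pirr
  set K := AdjoinRoot p with hK
  haveI : CharP K 2 := charP_of_injective_algebraMap (algebraMap F K).injective 2
  set β := AdjoinRoot.root p with hβdef
  set c' := algebraMap F K c with hc'
  have hgβ : β ^ q + β + c' = 0 := by
    obtain ⟨r, hr⟩ := pdvd
    have : (Polynomial.aeval β) (X ^ q + X + C c) = 0 := by
      rw [hr, map_mul, AdjoinRoot.aeval_eq, AdjoinRoot.mk_self, zero_mul]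
    simp at this; exact this
  have hadd : ∀ x y : K, (x + y) ^ q = x ^ q + y ^ q := by
    intro x y; rw [hq2]; exact add_pow_char_pow ..
  have haddN : ∀ x y : K, (x + y) ^ q ^ 4 = x ^ q ^ 4 + y ^ q ^ 4 := by
    intro x y; rw [hq2, ← pow_mul]; exact add_pow_char_pow ..
  have e1 : β ^ q = β + c' := by
    have h := hgβ
    rw [add_assoc] at h
    have := eq_neg_of_add_eq_zero_left h
    rwa [CharTwo.neg_eq] at this
  have e2 : (β ^ q) ^ q = β + (c' + c' ^ q) := by
    rw [e1, hadd, e1]; ring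
  have e3 : ((β ^ q) ^ q) ^ q = β + (c' + c' ^ q + (c' ^ q) ^ q) := by
    rw [e2, hadd, e1, hadd]; ring
  set s : K := c' + c' ^ q + (c' ^ q) ^ q + ((c' ^ q) ^ q) ^ q with hs_def
  have e4 : β ^ q ^ 4 = β + s := by
    rw [show q ^ 4 = q * q * q * q by ring, pow_mul, pow_mul, pow_mul, e3, hadd, e1, hadd, hadd]
    rw [hs_def]; ring
  -- c' is fixed by x ↦ x ^ q ^ 4
  have hcF : ∀ a : F, a ^ q ^ 4 = a := by
    intro a; rw [← hF]; exact FiniteField.pow_card a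
  have f0 : c' ^ q ^ 4 = c' := by rw [hc', ← map_pow, hcF]
  have hfix : ∀ x : K, x ^ q ^ 4 = x → (x ^ q) ^ q ^ 4 = x ^ q := by
    intro x hx; rw [pow_right_comm, hx]
  have f1 := hfix _ f0
  have f2 := hfix _ f1
  have f3 := hfix _ f2
  have hsN : s ^ q ^ 4 = s := by
    rw [hs_def, haddN, haddN, haddN, f0, f1, f2, f3]
  have hβfix : β ^ (q ^ 4 * q ^ 4) = β := by
    rw [pow_mul, e4, haddN, e4, hsN, add_assoc, CharTwo.add_self_eq_zero, add_zero]
  -- every element of K is fixed by x ↦ x ^ (q^4 * q^4)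
  have hFfix : ∀ a : F, a ^ (q ^ 4 * q ^ 4) = a := by
    intro a; rw [pow_mul, hcF, hcF]
  have hE : q ^ 4 * q ^ 4 = 2 ^ ((2 * m + 1) * 8) := by rw [hq2]; ring
  haveI : Fact (Nat.Prime 2) := ⟨Nat.prime_two⟩
  let Φ : K →+* K := iterateFrobenius K 2 ((2 * m + 1) * 8)
  have hΦ : ∀ x : K, Φ x = x ^ (q ^ 4 * q ^ 4) := by
    intro x; rw [hE]; rfl
  let Φ' : K →ₐ[F] K := AlgHom.mk' Φ (by
    intro a x
    rw [Algebra.smul_def, Algebra.smul_def, map_mul, hΦ, ← map_pow, hFfix])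
  have hall : ∀ x : K, x ^ (q ^ 4 * q ^ 4) = x := by
    have htop : Algebra.adjoin F ({β} : Set K) = ⊤ := AdjoinRoot.adjoinRoot_eq_top
    have hle : Algebra.adjoin F ({β} : Set K) ≤ AlgHom.equalizer Φ' (AlgHom.id F K) := by
      rw [Algebra.adjoin_le_iff, Set.singleton_subset_iff]
      show Φ' β = β
      show Φ β = β
      rw [hΦ, hβfix]
    rw [htop, top_le_iff] at hle
    intro x
    have hx : x ∈ AlgHom.equalizer Φ' (AlgHom.id F K) := hle ▸ Algebra.mem_top
    have := (AlgHom.mem_equalizer _ _ _).mp hx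
    rw [show Φ' x = Φ x from rfl, hΦ] at this
    exact this
  -- counting: card K ≤ (q^4)^2
  have hq4 : 2 ≤ q ^ 4 := by
    have : 2 ≤ q := by rw [hq2]; exact Nat.one_lt_two_pow (by omega)
    calc 2 ≤ q := this
    _ ≤ q ^ 4 := Nat.le_self_pow (by norm_num) q
  set pb : PowerBasis F K := AdjoinRoot.powerBasis pirr.ne_zero with hpb
  haveI : Fintype K := Module.fintypeOfFintype pb.basis
  have hcardK : Fintype.card K = (q ^ 4) ^ p.natDegree := by
    rw [Module.card_eq_pow_finrank (K := F) (V := K), hF, pb.finrank, hpb, AdjoinRoot.powerBasis_dim]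
  have hcard_le : Fintype.card K ≤ q ^ 4 * q ^ 4 := by
    set P : K[X] := X ^ (q ^ 4 * q ^ 4) - X with hP
    have hdeg : P.natDegree = q ^ 4 * q ^ 4 := by
      rw [hP, natDegree_sub_eq_left_of_natDegree_lt, natDegree_X_pow]
      rw [natDegree_X, natDegree_X_pow]; nlinarith
    have hPne : P ≠ 0 := by
      intro h0; rw [h0, natDegree_zero] at hdeg; nlinarith
    have hsub : (Finset.univ : Finset K) ⊆ P.roots.toFinset := by
      intro x _
      rw [Multiset.mem_toFinset, mem_roots hPne]
      simp [hP, IsRoot, hall x]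
    calc Fintype.card K = (Finset.univ : Finset K).card := rfl
      _ ≤ P.roots.toFinset.card := Finset.card_le_card hsub
      _ ≤ Multiset.card P.roots := P.roots.toFinset_card_le
      _ ≤ P.natDegree := P.card_roots'
      _ = q ^ 4 * q ^ 4 := hdeg
  rw [hcardK, show q ^ 4 * q ^ 4 = (q ^ 4) ^ 2 by ring] at hcard_le
  have hdle : p.natDegree ≤ 2 := (Nat.pow_le_pow_iff_right (by omega : 1 < q ^ 4)).mp hcard_le
  omega
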